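/- arXiv:1502.06280 — 6 statements merged into one kernel-verified Lean document; each statement's English description precedes it below -/
import Mathlib

section
/- The function u₁(ρ) = 80ρ²/(5+3ρ²)² satisfies -(1-ρ²)(u₁''(ρ) + (2/ρ)u₁'(ρ)) + 2ρ u₁'(ρ) + 2 u₁(ρ) + (V(ρ)/ρ²) u₁(ρ) = 0 for all ρ > 0, where V(ρ) = 6(25 - 90ρ² + 33ρ⁴)/(5+3ρ²)². That is, λ = 1 is an eigenvalue of the linearized spectral problem with eigenfunction u₁. -/
private lemma den_deriv (x : ℝ) :
    HasDerivAt (fun ρ : ℝ => (5 + 3 * ρ ^ 2) ^ 2) (2 * (5 + 3 * x ^ 2) * (6 * x)) x := by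
  have h : HasDerivAt (fun ρ : ℝ => 5 + 3 * ρ ^ 2) (6 * x) x := by
    have h1 := ((hasDerivAt_pow 2 x).const_mul (3 : ℝ)).const_add (5 : ℝ)
    refine h1.congr_deriv ?_
    all_goals push_cast; ring
  have := h.pow 2
  refine this.congr_deriv ?_
  all_goals push_cast; ring

private lemma deriv1 : deriv (fun ρ : ℝ => 80 * ρ ^ 2 / (5 + 3 * ρ ^ 2) ^ 2)
    = fun ρ : ℝ => (800 * ρ - 480 * ρ ^ 3) / (5 + 3 * ρ ^ 2) ^ 3 := by
  funext x
  have hne : (5 + 3 * x ^ 2) ^ 2 ≠ 0 := by positivity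
  have hnum : HasDerivAt (fun ρ : ℝ => 80 * ρ ^ 2) (160 * x) x := by
    have h1 := (hasDerivAt_pow 2 x).const_mul (80 : ℝ)
    refine h1.congr_deriv ?_
    all_goals push_cast; ring
  have h := hnum.div (den_deriv x) hne
  have h2 : HasDerivAt (fun ρ : ℝ => 80 * ρ ^ 2 / (5 + 3 * ρ ^ 2) ^ 2)
      ((800 * x - 480 * x ^ 3) / (5 + 3 * x ^ 2) ^ 3) x := by
    refine h.congr_deriv ?_
    have hne' : (5 + 3 * x ^ 2) ≠ 0 := by positivity
    field_simp
    ring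
  exact h2.deriv

private lemma deriv2 : deriv (fun ρ : ℝ => (800 * ρ - 480 * ρ ^ 3) / (5 + 3 * ρ ^ 2) ^ 3)
    = fun ρ : ℝ => (4000 - 19200 * ρ ^ 2 + 4320 * ρ ^ 4) / (5 + 3 * ρ ^ 2) ^ 4 := by
  funext x
  have hne : (5 + 3 * x ^ 2) ^ 3 ≠ 0 := by positivity
  have hnum : HasDerivAt (fun ρ : ℝ => 800 * ρ - 480 * ρ ^ 3) (800 - 1440 * x ^ 2) x := by
    have h1 : HasDerivAt (fun ρ : ℝ => 800 * ρ) (800 : ℝ) x := by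
      simpa using (hasDerivAt_id x).const_mul (800 : ℝ)
    have h2 : HasDerivAt (fun ρ : ℝ => 480 * ρ ^ 3) (1440 * x ^ 2) x := by
      have := (hasDerivAt_pow 3 x).const_mul (480 : ℝ)
      refine this.congr_deriv ?_
      push_cast; ring
    exact h1.sub h2
  have hden : HasDerivAt (fun ρ : ℝ => (5 + 3 * ρ ^ 2) ^ 3)
      (3 * (5 + 3 * x ^ 2) ^ 2 * (6 * x)) x := by
    have h : HasDerivAt (fun ρ : ℝ => 5 + 3 * ρ ^ 2) (6 * x) x := by
      have h1 := ((hasDerivAt_pow 2 x).const_mul (3 : ℝ)).const_add (5 : ℝ)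
      refine h1.congr_deriv ?_
      all_goals push_cast; ring
    have := h.pow 3
    refine this.congr_deriv ?_
    all_goals push_cast; ring
  have h := hnum.div hden hne
  have h2 : HasDerivAt (fun ρ : ℝ => (800 * ρ - 480 * ρ ^ 3) / (5 + 3 * ρ ^ 2) ^ 3)
      ((4000 - 19200 * x ^ 2 + 4320 * x ^ 4) / (5 + 3 * x ^ 2) ^ 4) x := by
    refine h.congr_deriv ?_
    have hne' : (5 + 3 * x ^ 2) ≠ 0 := by positivity
    field_simp
    ring
  exact h2.deriv

/-- `u₁(ρ) = 80ρ²/(5+3ρ²)²` is an eigenfunction of the linearized spectral problem with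
eigenvalue `λ = 1`:  `-(1-ρ²)(u₁'' + (2/ρ)u₁') + 2ρ u₁' + 2 u₁ + (V/ρ²) u₁ = 0` for `ρ > 0`,
where `V(ρ) = 6(25 - 90ρ² + 33ρ⁴)/(5+3ρ²)². -/
theorem stmt_1 (u₁ V : ℝ → ℝ)
    (hu : ∀ ρ : ℝ, u₁ ρ = 80 * ρ ^ 2 / (5 + 3 * ρ ^ 2) ^ 2)
    (hV : ∀ ρ : ℝ, V ρ = 6 * (25 - 90 * ρ ^ 2 + 33 * ρ ^ 4) / (5 + 3 * ρ ^ 2) ^ 2) :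
    ∀ ρ : ℝ, 0 < ρ →
      -((1 - ρ ^ 2) * (deriv (deriv u₁) ρ + (2 / ρ) * deriv u₁ ρ))
        + 2 * ρ * deriv u₁ ρ + 2 * u₁ ρ + (V ρ / ρ ^ 2) * u₁ ρ = 0 := by
  have hfun : u₁ = fun ρ => 80 * ρ ^ 2 / (5 + 3 * ρ ^ 2) ^ 2 := funext hu
  intro ρ hρ
  have hd1 : deriv u₁ = fun ρ : ℝ => (800 * ρ - 480 * ρ ^ 3) / (5 + 3 * ρ ^ 2) ^ 3 := by
    rw [hfun]; exact deriv1
  have hd2 : deriv (deriv u₁) ρ = (4000 - 19200 * ρ ^ 2 + 4320 * ρ ^ 4) / (5 + 3 * ρ ^ 2) ^ 4 := by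
    rw [hd1, deriv2]
  rw [hd2, hd1, hu, hV]
  have hne : (5 + 3 * ρ ^ 2) ≠ 0 := by positivity
  have hρne : ρ ≠ 0 := ne_of_gt hρ
  field_simp
  ring
end

section
/- The function v₁(ρ) = 80ρ³(1-ρ²)^{1/2}/(5+3ρ²)² satisfies v₁''(ρ) = V₁(ρ) v₁(ρ) for all ρ ∈ (0,1), where V₁(ρ) = V(ρ)/(ρ²(1-ρ²)) - 1/(1-ρ²)² and V(ρ) = 6(25 - 90ρ² + 33ρ⁴)/(5+3ρ²)². -/
private lemma pow_sqrt {ρ : ℝ} (h1 : (0:ℝ) < 1 - ρ ^ 2) :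
    Real.sqrt (1 - ρ ^ 2) ^ 2 = 1 - ρ ^ 2 ∧
    Real.sqrt (1 - ρ ^ 2) ^ 3 = (1 - ρ ^ 2) * Real.sqrt (1 - ρ ^ 2) ∧
    Real.sqrt (1 - ρ ^ 2) ^ 4 = (1 - ρ ^ 2) ^ 2 ∧
    Real.sqrt (1 - ρ ^ 2) ^ 5 = (1 - ρ ^ 2) ^ 2 * Real.sqrt (1 - ρ ^ 2) ∧
    Real.sqrt (1 - ρ ^ 2) ^ 6 = (1 - ρ ^ 2) ^ 3 := by
  have h2 : Real.sqrt (1 - ρ ^ 2) ^ 2 = 1 - ρ ^ 2 := Real.sq_sqrt h1.le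
  refine ⟨h2, ?_, ?_, ?_, ?_⟩
  · rw [pow_succ, h2]
  · rw [show 4 = 2*2 by rfl, pow_mul, h2]
  · rw [show (5:ℕ) = 2*2+1 by rfl, pow_succ, pow_mul, h2]
  · rw [show (6:ℕ) = 2*3 by rfl, pow_mul, h2]

private lemma sqrt_deriv {ρ : ℝ} (hρ : ρ ∈ Set.Ioo (0:ℝ) 1) :
    HasDerivAt (fun x : ℝ => Real.sqrt (1 - x ^ 2))
      (-ρ / Real.sqrt (1 - ρ ^ 2)) ρ := by
  have h1 : (0:ℝ) < 1 - ρ ^ 2 := by nlinarith [hρ.1, hρ.2]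
  have hinner : HasDerivAt (fun x : ℝ => 1 - x ^ 2) (-(2 * ρ)) ρ := by
    simpa using ((hasDerivAt_pow 2 ρ).const_sub 1)
  have := (Real.hasDerivAt_sqrt h1.ne').comp ρ hinner
  refine this.congr_deriv (Eq.symm ?_)
  have hs : Real.sqrt (1 - ρ ^ 2) ≠ 0 := by positivity
  field_simp

private lemma first_deriv {ρ : ℝ} (hρ : ρ ∈ Set.Ioo (0:ℝ) 1) :
    HasDerivAt (fun x : ℝ => 80 * x ^ 3 * Real.sqrt (1 - x ^ 2) / (5 + 3 * x ^ 2) ^ 2)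
      (80 * ρ ^ 2 * (15 - 23 * ρ ^ 2) / ((5 + 3 * ρ ^ 2) ^ 3 * Real.sqrt (1 - ρ ^ 2))) ρ := by
  have h1 : (0:ℝ) < 1 - ρ ^ 2 := by nlinarith [hρ.1, hρ.2]
  have hs : (0:ℝ) < Real.sqrt (1 - ρ ^ 2) := Real.sqrt_pos.mpr h1
  have hsq : Real.sqrt (1 - ρ ^ 2) ^ 2 = 1 - ρ ^ 2 := Real.sq_sqrt h1.le
  have hd : (0:ℝ) < 5 + 3 * ρ ^ 2 := by positivity
  have hnum : HasDerivAt (fun x : ℝ => 80 * x ^ 3 * Real.sqrt (1 - x ^ 2))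
      (80 * (3 * ρ ^ 2) * Real.sqrt (1 - ρ ^ 2)
        + 80 * ρ ^ 3 * (-ρ / Real.sqrt (1 - ρ ^ 2))) ρ := by
    have h3 : HasDerivAt (fun x : ℝ => 80 * x ^ 3) (80 * (3 * ρ ^ 2)) ρ := by
      simpa using (hasDerivAt_pow 3 ρ).const_mul 80
    exact h3.mul (sqrt_deriv hρ)
  have hden : HasDerivAt (fun x : ℝ => (5 + 3 * x ^ 2) ^ 2)
      (2 * (5 + 3 * ρ ^ 2) * (3 * (2 * ρ))) ρ := by
    have h4 : HasDerivAt (fun x : ℝ => 5 + 3 * x ^ 2) (3 * (2 * ρ)) ρ := by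
      simpa using ((hasDerivAt_pow 2 ρ).const_mul 3).const_add 5
    have := (hasDerivAt_pow 2 ((5:ℝ) + 3 * ρ ^ 2)).comp ρ h4
    refine this.congr_deriv (Eq.symm ?_); norm_num
  have := hnum.div hden (by positivity)
  refine this.congr_deriv (Eq.symm ?_)
  field_simp
  obtain ⟨e2, e3, e4, e5, e6⟩ := pow_sqrt h1
  ring_nf
  ring_nf at e2 e3 e4 e5 e6
  simp only [e6, e5, e4, e3, e2]
  ring

private lemma second_deriv {ρ : ℝ} (hρ : ρ ∈ Set.Ioo (0:ℝ) 1) :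
    HasDerivAt (fun x : ℝ => 80 * x ^ 2 * (15 - 23 * x ^ 2) / ((5 + 3 * x ^ 2) ^ 3 * Real.sqrt (1 - x ^ 2)))
      ((12000 * ρ - 57200 * ρ ^ 3 + 56640 * ρ ^ 5 - 16560 * ρ ^ 7)
        / ((5 + 3 * ρ ^ 2) ^ 4 * Real.sqrt (1 - ρ ^ 2) ^ 3)) ρ := by
  have h1 : (0:ℝ) < 1 - ρ ^ 2 := by nlinarith [hρ.1, hρ.2]
  have hs : (0:ℝ) < Real.sqrt (1 - ρ ^ 2) := Real.sqrt_pos.mpr h1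
  have hsq : Real.sqrt (1 - ρ ^ 2) ^ 2 = 1 - ρ ^ 2 := Real.sq_sqrt h1.le
  have hd : (0:ℝ) < 5 + 3 * ρ ^ 2 := by positivity
  have hnum : HasDerivAt (fun x : ℝ => 80 * x ^ 2 * (15 - 23 * x ^ 2))
      (80 * (2 * ρ) * (15 - 23 * ρ ^ 2) + 80 * ρ ^ 2 * (-(23 * (2 * ρ)))) ρ := by
    have h2 : HasDerivAt (fun x : ℝ => 80 * x ^ 2) (80 * (2 * ρ)) ρ := by
      simpa using (hasDerivAt_pow 2 ρ).const_mul 80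
    have h3 : HasDerivAt (fun x : ℝ => 15 - 23 * x ^ 2) (-(23 * (2 * ρ))) ρ := by
      simpa using (((hasDerivAt_pow 2 ρ).const_mul 23).const_sub 15)
    exact h2.mul h3
  have hpow : HasDerivAt (fun x : ℝ => (5 + 3 * x ^ 2) ^ 3)
      (3 * (5 + 3 * ρ ^ 2) ^ 2 * (3 * (2 * ρ))) ρ := by
    have h4 : HasDerivAt (fun x : ℝ => 5 + 3 * x ^ 2) (3 * (2 * ρ)) ρ := by
      simpa using ((hasDerivAt_pow 2 ρ).const_mul 3).const_add 5
    have := (hasDerivAt_pow 3 ((5:ℝ) + 3 * ρ ^ 2)).comp ρ h4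
    refine this.congr_deriv (Eq.symm ?_)
    norm_num
  have hden : HasDerivAt (fun x : ℝ => (5 + 3 * x ^ 2) ^ 3 * Real.sqrt (1 - x ^ 2))
      (3 * (5 + 3 * ρ ^ 2) ^ 2 * (3 * (2 * ρ)) * Real.sqrt (1 - ρ ^ 2)
        + (5 + 3 * ρ ^ 2) ^ 3 * (-ρ / Real.sqrt (1 - ρ ^ 2))) ρ :=
    hpow.mul (sqrt_deriv hρ)
  have := hnum.div hden (by positivity)
  refine this.congr_deriv (Eq.symm ?_)
  have h3 : Real.sqrt (1 - ρ ^ 2) ^ 3 = (1 - ρ ^ 2) * Real.sqrt (1 - ρ ^ 2) := by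
    rw [pow_succ, hsq]
  rw [h3]
  field_simp
  obtain ⟨e2, e3, e4, e5, e6⟩ := pow_sqrt h1
  ring_nf
  ring_nf at e2 e3 e4 e5 e6
  simp only [e6, e5, e4, e3, e2]
  ring


/-- `v₁(ρ) = 80ρ³√(1-ρ²)/(5+3ρ²)²` satisfies `v₁'' = V₁ v₁` on `(0,1)`, where
`V₁(ρ) = V(ρ)/(ρ²(1-ρ²)) - 1/(1-ρ²)²` and `V(ρ) = 6(25 - 90ρ² + 33ρ⁴)/(5+3ρ²)²`. -/
theorem stmt_4 (v₁ V V₁ : ℝ → ℝ)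
    (hv : ∀ ρ : ℝ, v₁ ρ = 80 * ρ ^ 3 * Real.sqrt (1 - ρ ^ 2) / (5 + 3 * ρ ^ 2) ^ 2)
    (hV : ∀ ρ : ℝ, V ρ = 6 * (25 - 90 * ρ ^ 2 + 33 * ρ ^ 4) / (5 + 3 * ρ ^ 2) ^ 2)
    (hV₁ : ∀ ρ : ℝ, V₁ ρ = V ρ / (ρ ^ 2 * (1 - ρ ^ 2)) - 1 / (1 - ρ ^ 2) ^ 2) :
    ∀ ρ ∈ Set.Ioo (0 : ℝ) 1, deriv (deriv v₁) ρ = V₁ ρ * v₁ ρ := by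
  intro ρ hρ
  have hv₁ : v₁ = fun x => 80 * x ^ 3 * Real.sqrt (1 - x ^ 2) / (5 + 3 * x ^ 2) ^ 2 :=
    funext hv
  have hopen : Set.Ioo (0:ℝ) 1 ∈ nhds ρ := (isOpen_Ioo).mem_nhds hρ
  -- deriv v₁ agrees with g on Ioo 0 1
  have hderiv_eq : deriv v₁ =ᶠ[nhds ρ]
      fun x => 80 * x ^ 2 * (15 - 23 * x ^ 2) / ((5 + 3 * x ^ 2) ^ 3 * Real.sqrt (1 - x ^ 2)) := by
    filter_upwards [hopen] with x hx
    rw [hv₁]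
    exact (first_deriv hx).deriv
  have key : deriv (deriv v₁) ρ =
      (12000 * ρ - 57200 * ρ ^ 3 + 56640 * ρ ^ 5 - 16560 * ρ ^ 7)
        / ((5 + 3 * ρ ^ 2) ^ 4 * Real.sqrt (1 - ρ ^ 2) ^ 3) := by
    rw [Filter.EventuallyEq.deriv_eq hderiv_eq]
    exact (second_deriv hρ).deriv
  rw [key, hv ρ, hV₁ ρ, hV ρ]
  have h1 : (0:ℝ) < 1 - ρ ^ 2 := by nlinarith [hρ.1, hρ.2]
  have hs : (0:ℝ) < Real.sqrt (1 - ρ ^ 2) := Real.sqrt_pos.mpr h1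
  have hsq : Real.sqrt (1 - ρ ^ 2) ^ 2 = 1 - ρ ^ 2 := Real.sq_sqrt h1.le
  have hd : (0:ℝ) < 5 + 3 * ρ ^ 2 := by positivity
  have h3 : Real.sqrt (1 - ρ ^ 2) ^ 3 = (1 - ρ ^ 2) * Real.sqrt (1 - ρ ^ 2) := by
    rw [pow_succ, hsq]
  rw [h3]
  have hρ0 : ρ ≠ 0 := ne_of_gt hρ.1
  field_simp
  obtain ⟨e2, e3, e4, e5, e6⟩ := pow_sqrt h1
  ring_nf
  ring_nf at e2 e3 e4 e5 e6
  simp only [e6, e5, e4, e3, e2]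
  ring
end

section
/- Let (aₙ) be any solution of the recurrence p₃(n)a_{n+3} + p₂(n)a_{n+2} + p₁(n)a_{n+1} + p₀(n)aₙ = 0 (with pᵢ as above, depending on λ ∈ ℂ), and define bₙ = a_{n+1} + (3/5)aₙ. Then (bₙ) satisfies q₂(n)b_{n+2} + q₁(n)b_{n+1} + q₀(n)bₙ = 0 for all n ≥ 0, where q₂(n) = -20n² - 190n - 390, q₁(n) = 8n² + (20λ+84)n + 5λ² + 75λ + 160, q₀(n) = 12n² + (12λ+42)n + 3λ² + 21λ + 30. -/
/-- Order reduction: if `(aₙ)` solves the four-term recurrence with coefficients `pᵢ`, then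
`bₙ = a_{n+1} + (3/5)aₙ` solves the three-term recurrence with coefficients `qᵢ`. -/
theorem stmt_8 (Λ : ℂ) (a b : ℕ → ℂ)
    (ha : ∀ n : ℕ,
      (-100 * (n : ℂ) ^ 2 - 950 * n - 1950) * a (n + 3)
      + (-20 * (n : ℂ) ^ 2 + (100 * Λ - 150) * n + 25 * Λ ^ 2 + 375 * Λ - 370) * a (n + 2)
      + (84 * (n : ℂ) ^ 2 + (120 * Λ + 462) * n + 30 * Λ ^ 2 + 330 * Λ + 630) * a (n + 1)
      + (36 * (n : ℂ) ^ 2 + (36 * Λ + 126) * n + 9 * Λ ^ 2 + 63 * Λ + 90) * a n = 0)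
    (hb : ∀ n : ℕ, b n = a (n + 1) + (3/5 : ℂ) * a n) :
    ∀ n : ℕ,
      (-20 * (n : ℂ) ^ 2 - 190 * n - 390) * b (n + 2)
      + (8 * (n : ℂ) ^ 2 + (20 * Λ + 84) * n + 5 * Λ ^ 2 + 75 * Λ + 160) * b (n + 1)
      + (12 * (n : ℂ) ^ 2 + (12 * Λ + 42) * n + 3 * Λ ^ 2 + 21 * Λ + 30) * b n = 0 := by
  intro n
  rw [hb, hb, hb]
  have h := ha n
  show ((-20 * (n : ℂ) ^ 2 - 190 * n - 390)) * (a (n + 2 + 1) + (3/5 : ℂ) * a (n + 2))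
      + (8 * (n : ℂ) ^ 2 + (20 * Λ + 84) * n + 5 * Λ ^ 2 + 75 * Λ + 160) * (a (n + 1 + 1) + (3/5 : ℂ) * a (n + 1))
      + (12 * (n : ℂ) ^ 2 + (12 * Λ + 42) * n + 3 * Λ ^ 2 + 21 * Λ + 30) * (a (n + 1) + (3/5 : ℂ) * a n) = 0
  have e3 : n + 2 + 1 = n + 3 := by ring
  have e2 : n + 1 + 1 = n + 2 := by ring
  rw [e3, e2]
  linear_combination (1/5 : ℂ) * h
end

section
/- The polynomial 25λ⁴ + 450λ³ + 2735λ² + 5070λ + 2016 is Hurwitz-stable: all of its complex roots have strictly negative real part. -/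
/-- The polynomial `25λ⁴ + 450λ³ + 2735λ² + 5070λ + 2016` is Hurwitz-stable: every
complex root has strictly negative real part. -/
theorem stmt_13 :
    ∀ z : ℂ, 25 * z ^ 4 + 450 * z ^ 3 + 2735 * z ^ 2 + 5070 * z + 2016 = 0 → z.re < 0 := by
  intro z h
  by_contra hx
  push_neg at hx
  set x := z.re with hxd
  set y := z.im with hyd
  have h1 : 25*(x^4-6*x^2*y^2+y^4)+450*(x^3-3*x*y^2)+2735*(x^2-y^2)+5070*x+2016 = 0 := by
    have := congrArg Complex.re h
    simp [pow_succ, Complex.mul_re, Complex.mul_im] at this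
    linarith [this]
  have h2 : y*(100*x^3-100*x*y^2+1350*x^2-450*y^2+5470*x+5070) = 0 := by
    have := congrArg Complex.im h
    simp [pow_succ, Complex.mul_re, Complex.mul_im] at this
    nlinarith [this]
  rcases mul_eq_zero.mp h2 with hy | hE
  · rw [hy] at h1
    nlinarith [pow_nonneg hx 4, pow_nonneg hx 3, pow_nonneg hx 2]
  · have h3 : y^2*(100*x+450) = 100*x^3+1350*x^2+5470*x+5070 := by nlinarith [hE]
    have key : 1000000*x^6 + 27000000*x^5 + 297700000*x^4 + 1713600000*x^3
        + 5386712500*x^2 + 8604112500*x + 5189040000 = 0 := by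
      linear_combination (-(100*x+450)^2) * h1
        + (25*(y^2*(100*x+450) + (100*x^3+1350*x^2+5470*x+5070)) - (150*x^2+1350*x+2735)*(100*x+450)) * h3
    nlinarith [pow_nonneg hx 6, pow_nonneg hx 5, pow_nonneg hx 4, pow_nonneg hx 3, pow_nonneg hx 2]
end

section
/- For every λ ∈ ℂ with Re λ ≥ 0, |δ₁(λ)| ≤ 1/4, where δ₁(λ) = [-5λ²(15λ³ - 20λ² - 939λ + 1412) - 36(1093λ - 256)] / [(5λ² + 78λ + 234)(25λ⁴ + 450λ³ + 2735λ² + 5070λ + 2016)]. -/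
set_option maxHeartbeats 4000000

lemma main_ineq (x y : ℝ) (hx : 0 ≤ x) :
    16 * (((9216:ℝ) + (7060:ℝ)*y^2 + (100:ℝ)*y^4 + (-39348:ℝ)*x^1 + (-14085:ℝ)*x^1*y^2 + (-375:ℝ)*x^1*y^4 + (-7060:ℝ)*x^2 + (-600:ℝ)*x^2*y^2 + (4695:ℝ)*x^3 + (750:ℝ)*x^3*y^2 + (100:ℝ)*x^4 + (-75:ℝ)*x^5)^2 + ((-39348:ℝ)*y^1 + (-4695:ℝ)*y^3 + (-75:ℝ)*y^5 + (-14120:ℝ)*x^1*y^1 + (-400:ℝ)*x^1*y^3 + (14085:ℝ)*x^2*y^1 + (750:ℝ)*x^2*y^3 + (400:ℝ)*x^3*y^1 + (-375:ℝ)*x^4*y^1)^2) ≤ ((471744:ℝ) + (-1045530:ℝ)*y^2 + (54625:ℝ)*y^4 + (-125:ℝ)*y^6 + (1343628:ℝ)*x^1 + (-1031940:ℝ)*x^1*y^2 + (21000:ℝ)*x^1*y^4 + (1045530:ℝ)*x^2 + (-327750:ℝ)*x^2*y^2 + (1875:ℝ)*x^2*y^4 + (343980:ℝ)*x^3 + (-42000:ℝ)*x^3*y^2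 + (54625:ℝ)*x^4 + (-1875:ℝ)*x^4*y^2 + (4200:ℝ)*x^5 + (125:ℝ)*x^6)^2 + ((1343628:ℝ)*y^1 + (-343980:ℝ)*y^3 + (4200:ℝ)*y^5 + (2091060:ℝ)*x^1*y^1 + (-218500:ℝ)*x^1*y^3 + (750:ℝ)*x^1*y^5 + (1031940:ℝ)*x^2*y^1 + (-42000:ℝ)*x^2*y^3 + (218500:ℝ)*x^3*y^1 + (-2500:ℝ)*x^3*y^3 + (21000:ℝ)*x^4*y^1 + (750:ℝ)*x^5*y^1)^2 := by
  have key : ((471744:ℝ) + (-1045530:ℝ)*y^2 + (54625:ℝ)*y^4 + (-125:ℝ)*y^6 + (1343628:ℝ)*x^1 + (-1031940:ℝ)*x^1*y^2 + (21000:ℝ)*x^1*y^4 + (1045530:ℝ)*x^2 + (-327750:ℝ)*x^2*y^2 + (1875:ℝ)*x^2*y^4 + (343980:ℝ)*x^3 + (-42000:ℝ)*x^3*y^2 + (54625:ℝ)*x^4 + (-1875:ℝ)*x^4*y^2 + (4200:ℝ)*x^5 + (125:ℝ)*x^6)^2 + ((1343628:ℝ)*y^1 + (-343980:ℝ)*y^3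 + (4200:ℝ)*y^5 + (2091060:ℝ)*x^1*y^1 + (-218500:ℝ)*x^1*y^3 + (750:ℝ)*x^1*y^5 + (1031940:ℝ)*x^2*y^1 + (-42000:ℝ)*x^2*y^3 + (218500:ℝ)*x^3*y^1 + (-2500:ℝ)*x^3*y^3 + (21000:ℝ)*x^4*y^1 + (750:ℝ)*x^5*y^1)^2 - 16 * (((9216:ℝ) + (7060:ℝ)*y^2 + (100:ℝ)*y^4 + (-39348:ℝ)*x^1 + (-14085:ℝ)*x^1*y^2 + (-375:ℝ)*x^1*y^4 + (-7060:ℝ)*x^2 + (-600:ℝ)*x^2*y^2 + (4695:ℝ)*x^3 + (750:ℝ)*x^3*y^2 + (100:ℝ)*x^4 + (-75:ℝ)*x^5)^2 + ((-39348:ℝ)*y^1 + (-4695:ℝ)*y^3 + (-75:ℝ)*y^5 + (-14120:ℝ)*x^1*y^1 + (-400:ℝ)*x^1*y^3 + (14085:ℝ)*x^2*y^1 + (750:ℝ)*x^2*y^3 + (400:ℝ)*x^3*y^1 + (-375:ℝ)*x^4*y^1)^2)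
      = ((221183447040:ℝ) + (792036873360:ℝ)*y^2 + (213570061700:ℝ)*y^4 + (14796911500:ℝ)*y^6 + (344413125:ℝ)*y^8 + (3893750:ℝ)*y^10 + (15625:ℝ)*y^12) + x^1 * ((1279301091840:ℝ) + (1831248094320:ℝ)*y^2 + (299515535400:ℝ)*y^4 + (12947802000:ℝ)*y^6 + (201105000:ℝ)*y^8 + (1050000:ℝ)*y^10) + x^2 * ((2769091048080:ℝ) + (1875619721800:ℝ)*y^2 + (185470751500:ℝ)*y^4 + (5087992500:ℝ)*y^6 + (46781250:ℝ)*y^8 + (93750:ℝ)*y^10) + x^3 * ((3123873655920:ℝ) + (1107004801200:ℝ)*y^2 + (67187298000:ℝ)*y^4 + (1148400000:ℝ)*y^6 + (5250000:ℝ)*y^8) + x^4 * ((2074117986500:ℝ) + (410426160500:ℝ)*y^2 + (15288558750:ℝ)*y^4 + (148187500:ℝ)*y^6 + (234375:ℝ)*y^8) + x^5 * ((871245553800:ℝ) + (100905702000:ℝ)*y^2 + (2238570000:ℝ)*y^4 + (10500000:ℝ)*y^6) + x^6 * ((243526272500:ℝ) + (16690792500:ℝ)*y^2 + (202812500:ℝ)*y^4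 + (312500:ℝ)*y^6) + x^7 * ((46666206000:ℝ) + (1836360000:ℝ)*y^2 + (10500000:ℝ)*y^4) + x^8 * ((6145813125:ℝ) + (128718750:ℝ)*y^2 + (234375:ℝ)*y^4) + x^9 * ((545085000:ℝ) + (5250000:ℝ)*y^2) + x^10 * ((31206250:ℝ) + (93750:ℝ)*y^2) + x^11 * ((1050000:ℝ)) + x^12 * ((15625:ℝ)) := by ring
  have h0 : (0:ℝ) ≤ (221183447040:ℝ) + (792036873360:ℝ)*y^2 + (213570061700:ℝ)*y^4 + (14796911500:ℝ)*y^6 + (344413125:ℝ)*y^8 + (3893750:ℝ)*y^10 + (15625:ℝ)*y^12 := by positivity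
  have h1 : (0:ℝ) ≤ x^1 * ((1279301091840:ℝ) + (1831248094320:ℝ)*y^2 + (299515535400:ℝ)*y^4 + (12947802000:ℝ)*y^6 + (201105000:ℝ)*y^8 + (1050000:ℝ)*y^10) := mul_nonneg (pow_nonneg hx _) (by positivity)
  have h2 : (0:ℝ) ≤ x^2 * ((2769091048080:ℝ) + (1875619721800:ℝ)*y^2 + (185470751500:ℝ)*y^4 + (5087992500:ℝ)*y^6 + (46781250:ℝ)*y^8 + (93750:ℝ)*y^10) := mul_nonneg (pow_nonneg hx _) (by positivity)
  have h3 : (0:ℝ) ≤ x^3 * ((3123873655920:ℝ) + (1107004801200:ℝ)*y^2 + (67187298000:ℝ)*y^4 + (1148400000:ℝ)*y^6 + (5250000:ℝ)*y^8) := mul_nonneg (pow_nonneg hx _) (by positivity)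
  have h4 : (0:ℝ) ≤ x^4 * ((2074117986500:ℝ) + (410426160500:ℝ)*y^2 + (15288558750:ℝ)*y^4 + (148187500:ℝ)*y^6 + (234375:ℝ)*y^8) := mul_nonneg (pow_nonneg hx _) (by positivity)
  have h5 : (0:ℝ) ≤ x^5 * ((871245553800:ℝ) + (100905702000:ℝ)*y^2 + (2238570000:ℝ)*y^4 + (10500000:ℝ)*y^6) := mul_nonneg (pow_nonneg hx _) (by positivity)
  have h6 : (0:ℝ) ≤ x^6 * ((243526272500:ℝ) + (16690792500:ℝ)*y^2 + (202812500:ℝ)*y^4 + (312500:ℝ)*y^6) := mul_nonneg (pow_nonneg hx _) (by positivity)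
  have h7 : (0:ℝ) ≤ x^7 * ((46666206000:ℝ) + (1836360000:ℝ)*y^2 + (10500000:ℝ)*y^4) := mul_nonneg (pow_nonneg hx _) (by positivity)
  have h8 : (0:ℝ) ≤ x^8 * ((6145813125:ℝ) + (128718750:ℝ)*y^2 + (234375:ℝ)*y^4) := mul_nonneg (pow_nonneg hx _) (by positivity)
  have h9 : (0:ℝ) ≤ x^9 * ((545085000:ℝ) + (5250000:ℝ)*y^2) := mul_nonneg (pow_nonneg hx _) (by positivity)
  have h10 : (0:ℝ) ≤ x^10 * ((31206250:ℝ) + (93750:ℝ)*y^2) := mul_nonneg (pow_nonneg hx _) (by positivity)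
  have h11 : (0:ℝ) ≤ x^11 * ((1050000:ℝ)) := mul_nonneg (pow_nonneg hx _) (by positivity)
  have h12 : (0:ℝ) ≤ x^12 * ((15625:ℝ)) := mul_nonneg (pow_nonneg hx _) (by positivity)
  linarith [key, h0, h1, h2, h3, h4, h5, h6, h7, h8, h9, h10, h11, h12]

/-- The initial relative error `δ₁` satisfies `|δ₁(λ)| ≤ 1/4` on the closed right
half-plane `{Re λ ≥ 0}`. -/
theorem stmt_15 :
    ∀ Λ : ℂ, 0 ≤ Λ.re →
      ‖((-5 * Λ ^ 2 * (15 * Λ ^ 3 - 20 * Λ ^ 2 - 939 * Λ + 1412)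
          - 36 * (1093 * Λ - 256))
        / ((5 * Λ ^ 2 + 78 * Λ + 234)
          * (25 * Λ ^ 4 + 450 * Λ ^ 3 + 2735 * Λ ^ 2 + 5070 * Λ + 2016)))‖ ≤ 1/4 := by
  intro Λ hΛ
  set x : ℝ := Λ.re with hxdef
  set y : ℝ := Λ.im with hydef
  have hΛeq : Λ = (x : ℂ) + (y : ℂ) * Complex.I := (Complex.re_add_im Λ).symm
  set N : ℂ := -5 * Λ ^ 2 * (15 * Λ ^ 3 - 20 * Λ ^ 2 - 939 * Λ + 1412)
          - 36 * (1093 * Λ - 256) with hNdef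
  set D : ℂ := (5 * Λ ^ 2 + 78 * Λ + 234)
          * (25 * Λ ^ 4 + 450 * Λ ^ 3 + 2735 * Λ ^ 2 + 5070 * Λ + 2016) with hDdef
  have hN : N = (((9216:ℝ) + (7060:ℝ)*y^2 + (100:ℝ)*y^4 + (-39348:ℝ)*x^1 + (-14085:ℝ)*x^1*y^2 + (-375:ℝ)*x^1*y^4 + (-7060:ℝ)*x^2 + (-600:ℝ)*x^2*y^2 + (4695:ℝ)*x^3 + (750:ℝ)*x^3*y^2 + (100:ℝ)*x^4 + (-75:ℝ)*x^5 : ℝ) : ℂ) + (((-39348:ℝ)*y^1 + (-4695:ℝ)*y^3 + (-75:ℝ)*y^5 + (-14120:ℝ)*x^1*y^1 + (-400:ℝ)*x^1*y^3 + (14085:ℝ)*x^2*y^1 + (750:ℝ)*x^2*y^3 + (400:ℝ)*x^3*y^1 + (-375:ℝ)*x^4*y^1 : ℝ) : ℂ) * Complex.I := by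
    rw [hNdef, hΛeq]
    apply Complex.ext <;>
      simp [Complex.add_re, Complex.add_im, Complex.sub_re, Complex.sub_im,
        Complex.mul_re, Complex.mul_im, pow_succ] <;> ring
  have hD : D = (((471744:ℝ) + (-1045530:ℝ)*y^2 + (54625:ℝ)*y^4 + (-125:ℝ)*y^6 + (1343628:ℝ)*x^1 + (-1031940:ℝ)*x^1*y^2 + (21000:ℝ)*x^1*y^4 + (1045530:ℝ)*x^2 + (-327750:ℝ)*x^2*y^2 + (1875:ℝ)*x^2*y^4 + (343980:ℝ)*x^3 + (-42000:ℝ)*x^3*y^2 + (54625:ℝ)*x^4 + (-1875:ℝ)*x^4*y^2 + (4200:ℝ)*x^5 + (125:ℝ)*x^6 : ℝ) : ℂ) + (((1343628:ℝ)*y^1 + (-343980:ℝ)*y^3 + (4200:ℝ)*y^5 + (2091060:ℝ)*x^1*y^1 + (-218500:ℝ)*x^1*y^3 + (750:ℝ)*x^1*y^5 + (1031940:ℝ)*x^2*y^1 + (-42000:ℝ)*x^2*y^3 + (218500:ℝ)*x^3*y^1 + (-2500:ℝ)*x^3*y^3 + (21000:ℝ)*x^4*y^1 + (750:ℝ)*x^5*y^1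 : ℝ) : ℂ) * Complex.I := by
    rw [hDdef, hΛeq]
    apply Complex.ext <;>
      simp [Complex.add_re, Complex.add_im, Complex.sub_re, Complex.sub_im,
        Complex.mul_re, Complex.mul_im, pow_succ] <;> ring
  have habs : ‖N‖ ≤ 1/4 * ‖D‖ := by
    have h2 : ‖N‖ ^ 2 ≤ (1/4 * ‖D‖) ^ 2 := by
      rw [mul_pow, Complex.sq_norm, Complex.sq_norm, hN, hD,
        Complex.normSq_add_mul_I, Complex.normSq_add_mul_I]
      nlinarith [main_ineq x y hΛ]
    have h3 := Real.sqrt_le_sqrt h2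
    rwa [Real.sqrt_sq (norm_nonneg N), Real.sqrt_sq (by positivity)] at h3
  rw [norm_div]
  rcases eq_or_lt_of_le (norm_nonneg D) with hD0 | hD0
  · rw [← hD0]; norm_num
  · rw [div_le_iff₀ hD0]
    linarith
end

section
/- For every integer n ≥ 0 and every real t, |C_{n+1}(it)|² ≤ 9/25, where C_{n+1}(λ) = P₁(n,λ)/P₂(n,λ) with P₁(n,λ) = -3(n+5)(n+6)(4n²+39n+78)(4n²+47n+121)[λ² + (4n+11)λ + 4n² + 22n + 28] and P₂(n,λ) = 10(2n²+23n+60)[(n+5)λ² + (4n²+39n+78)(λ+n+3)][(n+6)λ² + (4n²+47n+121)(λ+n+4)]. -/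
set_option maxHeartbeats 4000000


/-- On the imaginary axis, the contraction coefficient `C_{n+1}(λ) = P₁(n,λ)/P₂(n,λ)`
satisfies `|C_{n+1}(it)|² ≤ 9/25` for every integer `n ≥ 0` and every real `t`. -/
theorem stmt_16 (P₁ P₂ : ℕ → ℂ → ℂ)
    (hP₁ : ∀ (n : ℕ) (Λ : ℂ), P₁ n Λ =
      -3 * ((n : ℂ) + 5) * ((n : ℂ) + 6) * (4 * (n : ℂ) ^ 2 + 39 * n + 78)
        * (4 * (n : ℂ) ^ 2 + 47 * n + 121)
        * (Λ ^ 2 + (4 * (n : ℂ) + 11) * Λ + 4 * (n : ℂ) ^ 2 + 22 * n + 28))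
    (hP₂ : ∀ (n : ℕ) (Λ : ℂ), P₂ n Λ =
      10 * (2 * (n : ℂ) ^ 2 + 23 * n + 60)
        * (((n : ℂ) + 5) * Λ ^ 2 + (4 * (n : ℂ) ^ 2 + 39 * n + 78) * (Λ + (n : ℂ) + 3))
        * (((n : ℂ) + 6) * Λ ^ 2 + (4 * (n : ℂ) ^ 2 + 47 * n + 121) * (Λ + (n : ℂ) + 4))) :
    ∀ (n : ℕ) (t : ℝ),
      ‖P₁ n (Complex.I * t) / P₂ n (Complex.I * t)‖ ^ 2 ≤ 9/25 := by
  intro n t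
  have e1 : P₁ n (Complex.I * t) =
      ((-3*((n:ℝ)+5)*((n:ℝ)+6)*(4*(n:ℝ)^2+39*(n:ℝ)+78)*(4*(n:ℝ)^2+47*(n:ℝ)+121)
        *(4*(n:ℝ)^2+22*(n:ℝ)+28 - t^2) : ℝ) : ℂ) +
      ((-3*((n:ℝ)+5)*((n:ℝ)+6)*(4*(n:ℝ)^2+39*(n:ℝ)+78)*(4*(n:ℝ)^2+47*(n:ℝ)+121)
        *((4*(n:ℝ)+11)*t) : ℝ) : ℂ) * Complex.I := by
    rw [hP₁ n]
    push_cast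
    linear_combination (-3*((n:ℂ)+5)*((n:ℂ)+6)*(4*(n:ℂ)^2+39*(n:ℂ)+78)
      *(4*(n:ℂ)^2+47*(n:ℂ)+121)*(t:ℂ)^2) * Complex.I_sq
  have hN1 : Complex.normSq (P₁ n (Complex.I * t)) =
      9*(((n:ℝ)+5)*((n:ℝ)+6)*(4*(n:ℝ)^2+39*(n:ℝ)+78)*(4*(n:ℝ)^2+47*(n:ℝ)+121))^2 *
        ((4*(n:ℝ)^2+22*(n:ℝ)+28 - t^2)^2 + ((4*(n:ℝ)+11)*t)^2) := by
    rw [e1, Complex.normSq_add_mul_I]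
    ring
  have eE : (10:ℂ)*(2*(n:ℂ)^2+23*(n:ℂ)+60) = ((10*(2*(n:ℝ)^2+23*(n:ℝ)+60) : ℝ) : ℂ) := by
    push_cast; ring
  have f1 : ((n:ℂ)+5)*(Complex.I*t)^2 + (4*(n:ℂ)^2+39*(n:ℂ)+78)*(Complex.I*t+(n:ℂ)+3) =
      (((4*(n:ℝ)^2+39*(n:ℝ)+78)*((n:ℝ)+3) - ((n:ℝ)+5)*t^2 : ℝ) : ℂ) +
      (((4*(n:ℝ)^2+39*(n:ℝ)+78)*t : ℝ) : ℂ) * Complex.I := by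
    push_cast
    linear_combination (((n:ℂ)+5)*(t:ℂ)^2) * Complex.I_sq
  have f2 : ((n:ℂ)+6)*(Complex.I*t)^2 + (4*(n:ℂ)^2+47*(n:ℂ)+121)*(Complex.I*t+(n:ℂ)+4) =
      (((4*(n:ℝ)^2+47*(n:ℝ)+121)*((n:ℝ)+4) - ((n:ℝ)+6)*t^2 : ℝ) : ℂ) +
      (((4*(n:ℝ)^2+47*(n:ℝ)+121)*t : ℝ) : ℂ) * Complex.I := by
    push_cast
    linear_combination (((n:ℂ)+6)*(t:ℂ)^2) * Complex.I_sq
  have e2 : P₂ n (Complex.I * t) =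
      ((10*(2*(n:ℝ)^2+23*(n:ℝ)+60) : ℝ) : ℂ) *
      ((((4*(n:ℝ)^2+39*(n:ℝ)+78)*((n:ℝ)+3) - ((n:ℝ)+5)*t^2 : ℝ) : ℂ) +
        (((4*(n:ℝ)^2+39*(n:ℝ)+78)*t : ℝ) : ℂ) * Complex.I) *
      ((((4*(n:ℝ)^2+47*(n:ℝ)+121)*((n:ℝ)+4) - ((n:ℝ)+6)*t^2 : ℝ) : ℂ) +
        (((4*(n:ℝ)^2+47*(n:ℝ)+121)*t : ℝ) : ℂ) * Complex.I) := by
    rw [hP₂ n, ← f1, ← f2, ← eE]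
  have hN2 : Complex.normSq (P₂ n (Complex.I * t)) =
      100*(2*(n:ℝ)^2+23*(n:ℝ)+60)^2 *
        (((4*(n:ℝ)^2+39*(n:ℝ)+78)*((n:ℝ)+3) - ((n:ℝ)+5)*t^2)^2
          + ((4*(n:ℝ)^2+39*(n:ℝ)+78)*t)^2) *
        (((4*(n:ℝ)^2+47*(n:ℝ)+121)*((n:ℝ)+4) - ((n:ℝ)+6)*t^2)^2
          + ((4*(n:ℝ)^2+47*(n:ℝ)+121)*t)^2) := by
    rw [e2]
    simp only [map_mul, Complex.normSq_ofReal, Complex.normSq_add_mul_I]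
    ring
  have hpos : (0:ℝ) < Complex.normSq (P₂ n (Complex.I * t)) := by
    rw [hN2]
    have h1 : (((4*(n:ℝ)^2+39*(n:ℝ)+78)*((n:ℝ)+3) - ((n:ℝ)+5)*t^2)^2
          + ((4*(n:ℝ)^2+39*(n:ℝ)+78)*t)^2)
        = ((n:ℝ)+5)^2*(t^2)^2 + (4*(n:ℝ)^2+39*(n:ℝ)+78)*(2*(n:ℝ)^2+23*(n:ℝ)+48)*t^2
          + (4*(n:ℝ)^2+39*(n:ℝ)+78)^2*((n:ℝ)+3)^2 := by ring
    have h2 : (((4*(n:ℝ)^2+47*(n:ℝ)+121)*((n:ℝ)+4) - ((n:ℝ)+6)*t^2)^2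
          + ((4*(n:ℝ)^2+47*(n:ℝ)+121)*t)^2)
        = ((n:ℝ)+6)^2*(t^2)^2 + (4*(n:ℝ)^2+47*(n:ℝ)+121)*(2*(n:ℝ)^2+27*(n:ℝ)+73)*t^2
          + (4*(n:ℝ)^2+47*(n:ℝ)+121)^2*((n:ℝ)+4)^2 := by ring
    rw [h1, h2]
    positivity
  have key : (0:ℝ) ≤ 27417544783200000 + 3236253250230000*(t^2)^1 + 114472853910000*(t^2)^2 + 1152173160000*(t^2)^3 + 2916000000*(t^2)^4 + 96471753906528000*((n:ℝ))^1 + 9854148056688000*((n:ℝ))^1*(t^2)^1 + 287071940808000*((n:ℝ))^1*(t^2)^2 + 2285228916000*((n:ℝ))^1*(t^2)^3 + 4374000000*((n:ℝ))^1*(t^2)^4 + 156975406961256000*((n:ℝ))^2 + 13758799013026200*((n:ℝ))^2*(t^2)^1 + 324931355051400*((n:ℝ))^2*(t^2)^2 + 2012462604900*((n:ℝ))^2*(t^2)^3 + 2848770000*((n:ℝ))^2*(t^2)^4 + 156681152673552000*((n:ℝ))^3 + 11671400021695200*((n:ℝ))^3*(t^2)^1 + 219433941199800*((n:ℝ))^3*(t^2)^2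 + 1035692877600*((n:ℝ))^3*(t^2)^3 + 1052190000*((n:ℝ))^3*(t^2)^4 + 107277256258020000*((n:ℝ))^4 + 6717214122075675*((n:ℝ))^4*(t^2)^1 + 98453224554975*((n:ℝ))^4*(t^2)^2 + 344829996000*((n:ℝ))^4*(t^2)^3 + 241046100*((n:ℝ))^4*(t^2)^4 + 53368285532500800*((n:ℝ))^5 + 2773333362969900*((n:ℝ))^5*(t^2)^1 + 30915540786600*((n:ℝ))^5*(t^2)^2 + 77597028000*((n:ℝ))^5*(t^2)^3 + 35073000*((n:ℝ))^5*(t^2)^4 + 19927093819752000*((n:ℝ))^6 + 846653176452150*((n:ℝ))^6*(t^2)^1 + 6967426439250*((n:ℝ))^6*(t^2)^2 + 11951593200*((n:ℝ))^6*(t^2)^3 + 3165300*((n:ℝ))^6*(t^2)^4 + 5686354523156400*((n:ℝ))^7 + 194044505347800*((n:ℝ))^7*(t^2)^1 + 1135808573400*((n:ℝ))^7*(t^2)^2 + 1244178000*((n:ℝ))^7*(t^2)^3 + 162000*((n:ℝ))^7*(t^2)^4 + 1250218685836800*((n:ℝ))^8 + 33531259670775*((n:ℝ))^8*(t^2)^1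 + 132976709775*((n:ℝ))^8*(t^2)^2 + 83793600*((n:ℝ))^8*(t^2)^3 + 3600*((n:ℝ))^8*(t^2)^4 + 211773631518000*((n:ℝ))^9 + 4344722118900*((n:ℝ))^9*(t^2)^1 + 10910415600*((n:ℝ))^9*(t^2)^2 + 3297600*((n:ℝ))^9*(t^2)^3 + 27409615776000*((n:ℝ))^10 + 415242408600*((n:ℝ))^10*(t^2)^1 + 595900800*((n:ℝ))^10*(t^2)^2 + 57600*((n:ℝ))^10*(t^2)^3 + 2661834945600*((n:ℝ))^11 + 28364558400*((n:ℝ))^11*(t^2)^1 + 19468800*((n:ℝ))^11*(t^2)^2 + 187739366400*((n:ℝ))^12 + 1307923200*((n:ℝ))^12*(t^2)^1 + 288000*((n:ℝ))^12*(t^2)^2 + 9078220800*((n:ℝ))^13 + 36403200*((n:ℝ))^13*(t^2)^1 + 269107200*((n:ℝ))^14 + 460800*((n:ℝ))^14*(t^2)^1 + 3686400*((n:ℝ))^15 := by positivity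
  rw [norm_div, div_pow, Complex.sq_norm, Complex.sq_norm, hN1, hN2,
    div_le_iff₀ (by rw [hN2] at hpos; exact hpos)]
  linarith [key]
end
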